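/- arXiv:1608.08391 — 2 statements merged into one kernel-verified Lean document; each statement's English description precedes it below -/
import Mathlib

section
/- Let n ≥ 2 and 1 ≤ j, α ≤ n, and let x_{jα} : ℝ^{n×n} → ℝ be the matrix coefficient function x ↦ x_{jα}. Then on SO(n) one has τ(x_{jα}) = −((n−1)/2) · x_{jα}, i.e. for every x ∈ SO(n), Σ_{1 ≤ r < s ≤ n} (d²/ds²)|_{s=0} (x · exp(s·Y_{rs}))_{jα} = −((n−1)/2) · x_{jα}. -/
open Matrix

noncomputable section

/-- The matrix unit `E_{rs}` in `ℝ^{n×n}`. -/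
def matE (n : ℕ) (r s : Fin n) : Matrix (Fin n) (Fin n) ℝ :=
  Matrix.single r s 1

/-- `Y_{rs} = (E_{rs} − E_{sr})/√2`. -/
def matY (n : ℕ) (r s : Fin n) : Matrix (Fin n) (Fin n) ℝ :=
  (Real.sqrt 2)⁻¹ • (matE n r s - matE n s r)

/-- `Z(f)(x) = (d/ds)|₀ f(x·exp(sZ))`: derivative of `f` at `x` along the
left-invariant vector field determined by `Z`. -/
def lieD1 {n : ℕ} {E : Type*} [NormedAddCommGroup E] [NormedSpace ℝ E]
    (f : Matrix (Fin n) (Fin n) ℝ → E) (x Z : Matrix (Fin n) (Fin n) ℝ) : E :=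
  deriv (fun s : ℝ => f (x * NormedSpace.exp (s • Z))) 0

/-- `Z²(f)(x) = (d²/ds²)|₀ f(x·exp(sZ))`. -/
def lieD2 {n : ℕ} {E : Type*} [NormedAddCommGroup E] [NormedSpace ℝ E]
    (f : Matrix (Fin n) (Fin n) ℝ → E) (x Z : Matrix (Fin n) (Fin n) ℝ) : E :=
  deriv (deriv (fun s : ℝ => f (x * NormedSpace.exp (s • Z)))) 0

/-- The Laplace–Beltrami operator (tension field) on `SO(n)`:
`τ(f)(x) = Σ_{r<s} Y_{rs}²(f)(x)` for the standard orthonormal basis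
`B = {Y_{rs} : r < s}` of `so(n)`. -/
def tauSO (n : ℕ) {E : Type*} [NormedAddCommGroup E] [NormedSpace ℝ E]
    (f : Matrix (Fin n) (Fin n) ℝ → E) (x : Matrix (Fin n) (Fin n) ℝ) : E :=
  ∑ r : Fin n, ∑ s : Fin n, if r < s then lieD2 f x (matY n r s) else 0

/-- The conformality operator on `SO(n)`:
`κ(f,h)(x) = Σ_{r<s} Y_{rs}(f)(x)·Y_{rs}(h)(x)`. -/
def kappaSO (n : ℕ) {E : Type*} [NormedField E] [NormedSpace ℝ E]
    (f h : Matrix (Fin n) (Fin n) ℝ → E) (x : Matrix (Fin n) (Fin n) ℝ) : E :=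
  ∑ r : Fin n, ∑ s : Fin n, if r < s then
    lieD1 f x (matY n r s) * lieD1 h x (matY n r s) else 0

/-- The special orthogonal group `SO(n) = {x ∈ ℝ^{n×n} : x xᵗ = 1, det x = 1}`. -/
def SO (n : ℕ) : Set (Matrix (Fin n) (Fin n) ℝ) :=
  {x | x * x.transpose = 1 ∧ x.det = 1}


section AuxProof

attribute [local instance] Matrix.linftyOpNormedAddCommGroup Matrix.linftyOpNormedRing
  Matrix.linftyOpNormedAlgebra

private lemma hd_entry {n : ℕ} (j α : Fin n) (x Z : Matrix (Fin n) (Fin n) ℝ) (t : ℝ) :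
    HasDerivAt (fun s : ℝ => (x * NormedSpace.exp (s • Z)) j α)
      ((x * NormedSpace.exp (t • Z) * Z) j α) t := by
  have h2 := (hasDerivAt_exp_smul_const (𝕂 := ℝ) Z t).const_mul x
  rw [mul_assoc]
  exact ((Matrix.entryLinearMap ℝ ℝ j α).toContinuousLinearMap).hasFDerivAt.comp_hasDerivAt t h2

private lemma hd2_entry {n : ℕ} (j α : Fin n) (x Z : Matrix (Fin n) (Fin n) ℝ) :
    HasDerivAt (fun t : ℝ => (x * NormedSpace.exp (t • Z) * Z) j α)
      ((x * (Z * Z)) j α) 0 := by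
  have h2 := ((hasDerivAt_exp_smul_const (𝕂 := ℝ) Z 0).const_mul x).mul_const Z
  have h3 := ((Matrix.entryLinearMap ℝ ℝ j α).toContinuousLinearMap).hasFDerivAt.comp_hasDerivAt 0 h2
  simp only [zero_smul, NormedSpace.exp_zero, one_mul, mul_assoc] at h3
  simp only [mul_assoc]
  exact h3

private lemma lieD2_entry {n : ℕ} (j α : Fin n) (x Z : Matrix (Fin n) (Fin n) ℝ) :
    lieD2 (fun w => w j α) x Z = (x * (Z * Z)) j α := by
  unfold lieD2
  have hder : deriv (fun s : ℝ => (x * NormedSpace.exp (s • Z)) j α)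
      = fun t : ℝ => (x * NormedSpace.exp (t • Z) * Z) j α :=
    funext fun t => (hd_entry j α x Z t).deriv
  rw [hder]
  exact (hd2_entry j α x Z).deriv

end AuxProof

private lemma matY_sq {n : ℕ} {r s : Fin n} (h : r ≠ s) :
    matY n r s * matY n r s = (-(1/2) : ℝ) • (matE n r r + matE n s s) := by
  unfold matY matE
  have h2 : (Real.sqrt 2)⁻¹ * (Real.sqrt 2)⁻¹ = 1/2 := by
    rw [← mul_inv, Real.mul_self_sqrt (by norm_num)]; norm_num
  rw [smul_mul_smul_comm, sub_mul, mul_sub, mul_sub,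
    Matrix.single_mul_single_of_ne (c := (1:ℝ)) r s r (Ne.symm h),
    Matrix.single_mul_single_of_ne (c := (1:ℝ)) s r s h,
    Matrix.single_mul_single_same, Matrix.single_mul_single_same, h2]
  have : (0 : Matrix (Fin n) (Fin n) ℝ) - Matrix.single r r (1*1) -
      (Matrix.single s s (1*1) - 0)
        = -(Matrix.single r r 1 + Matrix.single s s 1) := by
    rw [mul_one]; abel
  rw [this, smul_neg, neg_smul]

private lemma mul_matE_apply {n : ℕ} (x : Matrix (Fin n) (Fin n) ℝ) (r j α : Fin n) :
    (x * matE n r r) j α = if α = r then x j α else 0 := by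
  unfold matE
  rcases eq_or_ne α r with rfl | hne
  · simp
  · simp [hne]

private lemma key_sum {n : ℕ} (α : Fin n) (c : ℝ) :
    (∑ r : Fin n, ∑ s : Fin n,
        if r < s then ((if α = r then c else 0) + (if α = s then c else 0)) else 0)
      = ((n : ℝ) - 1) * c := by
  have e1 : ∀ r s : Fin n,
      (if r < s then ((if α = r then c else 0) + (if α = s then c else 0)) else 0)
        = (if α = r then (if r < s then c else 0) else 0)
          + (if α = s then (if r < s then c else 0) else 0) := by
    intro r s; by_cases h1 : r < s <;> simp [h1]
  have e2 : ∀ r : Fin n,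
      (∑ s : Fin n, if α = r then (if r < s then c else 0) else 0)
        = if α = r then (∑ s : Fin n, if r < s then c else 0) else 0 := by
    intro r; split_ifs <;> simp
  calc (∑ r : Fin n, ∑ s : Fin n,
        if r < s then ((if α = r then c else 0) + (if α = s then c else 0)) else 0)
      = (∑ r : Fin n, ∑ s : Fin n, ((if α = r then (if r < s then c else 0) else 0)
          + (if α = s then (if r < s then c else 0) else 0))) := by
        refine Finset.sum_congr rfl fun r _ => Finset.sum_congr rfl fun s _ => e1 r s
    _ = (∑ r : Fin n, ∑ s : Fin n, (if α = r then (if r < s then c else 0) else 0))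
          + (∑ r : Fin n, ∑ s : Fin n, (if α = s then (if r < s then c else 0) else 0)) := by
        simp [Finset.sum_add_distrib]
    _ = (∑ s : Fin n, if α < s then c else 0) + (∑ r : Fin n, if r < α then c else 0) := by
        congr 1
        · simp only [e2]
          rw [Finset.sum_ite_eq]
          simp
        · refine Finset.sum_congr rfl fun r _ => ?_
          rw [Finset.sum_ite_eq]
          simp
    _ = (∑ t : Fin n, ((if α < t then c else 0) + (if t < α then c else 0))) := by
        rw [Finset.sum_add_distrib]
    _ = (∑ t : Fin n, (c - (if t = α then c else 0))) := by
        refine Finset.sum_congr rfl fun t _ => ?_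
        rcases lt_trichotomy t α with h | h | h
        · simp [h, not_lt.mpr h.le, ne_of_lt h]
        · simp [h]
        · simp [h, not_lt.mpr h.le, (ne_of_gt h)]
    _ = ((n : ℝ) - 1) * c := by
        rw [Finset.sum_sub_distrib, Finset.sum_const, Finset.sum_ite_eq']
        simp
        ring

/-- on `SO(n)` one has `τ(x_{jα}) = −((n−1)/2)·x_{jα}`. -/
theorem tau_coeff_SO (n : ℕ) (hn : 2 ≤ n) (j α : Fin n)
    (x : Matrix (Fin n) (Fin n) ℝ) (hx : x ∈ SO n) :
    tauSO n (fun w => w j α) x = -(((n : ℝ) - 1) / 2) * x j α := by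
  unfold tauSO
  have hterm : ∀ r s : Fin n, r < s →
      lieD2 (fun w => w j α) x (matY n r s)
        = -(1/2) * ((if α = r then x j α else 0) + (if α = s then x j α else 0)) := by
    intro r s hrs
    rw [lieD2_entry, matY_sq (ne_of_lt hrs), Matrix.mul_smul, Matrix.smul_apply,
      Matrix.mul_add, Matrix.add_apply, mul_matE_apply, mul_matE_apply, smul_eq_mul]
  have : (∑ r : Fin n, ∑ s : Fin n,
        if r < s then lieD2 (fun w => w j α) x (matY n r s) else 0)
      = -(1/2) * (∑ r : Fin n, ∑ s : Fin n,
          if r < s then ((if α = r then x j α else 0) + (if α = s then x j α else 0)) else 0) := by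
    rw [Finset.mul_sum]
    refine Finset.sum_congr rfl fun r _ => ?_
    rw [Finset.mul_sum]
    refine Finset.sum_congr rfl fun s _ => ?_
    by_cases hrs : r < s
    · simp only [hrs, if_true, hterm r s hrs]
    · simp [hrs]
  rw [this, key_sum α (x j α)]
  ring

end
end

section
/- Let n ≥ 2 and 1 ≤ j, k, α, β ≤ n, and let x_{jα}, x_{kβ} : ℝ^{n×n} → ℝ be the corresponding matrix coefficient functions. Then on SO(n) the conformality operator satisfies κ(x_{jα}, x_{kβ}) = −(1/2)·(x_{kα} x_{jβ} − δ_{kj} δ_{αβ}), i.e. for every x ∈ SO(n), Σ_{1 ≤ r < s ≤ n} ((d/ds)|_{s=0}(x·exp(sY_{rs}))_{jα}) · ((d/ds)|_{s=0}(x·exp(sY_{rs}))_{kβ}) = −(1/2)(x_{kα} x_{jβ} − δ_{kj} δ_{αβ}). -/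
open Matrix

noncomputable section

def dd {n : ℕ} (a b : Fin n) : ℝ := if a = b then 1 else 0

lemma lieD1_entry {n : ℕ} (j α : Fin n) (x Z : Matrix (Fin n) (Fin n) ℝ) :
    lieD1 (fun w => w j α) x Z = (x * Z) j α := by
  letI : NormedRing (Matrix (Fin n) (Fin n) ℝ) := Matrix.linftyOpNormedRing
  letI : NormedAlgebra ℝ (Matrix (Fin n) (Fin n) ℝ) := Matrix.linftyOpNormedAlgebra
  have h1 : HasDerivAt (fun s : ℝ => NormedSpace.exp (s • Z))
      (NormedSpace.exp ((0:ℝ) • Z) * Z) 0 := hasDerivAt_exp_smul_const Z 0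
  have h2 : HasDerivAt (fun s : ℝ => x * NormedSpace.exp (s • Z))
      (x * (NormedSpace.exp ((0:ℝ) • Z) * Z)) 0 := h1.const_mul x
  let L : Matrix (Fin n) (Fin n) ℝ →L[ℝ] ℝ :=
    (ContinuousLinearMap.proj α (R := ℝ) (φ := fun _ : Fin n => ℝ)).comp
      (ContinuousLinearMap.proj j (R := ℝ) (φ := fun _ : Fin n => Fin n → ℝ))
  have h3 : HasDerivAt (fun s : ℝ => (x * NormedSpace.exp (s • Z)) j α)
      ((x * (NormedSpace.exp ((0:ℝ) • Z) * Z)) j α) 0 :=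
    L.hasFDerivAt.comp_hasDerivAt 0 h2
  have := h3.deriv
  simpa [lieD1, zero_smul, NormedSpace.exp_zero] using this

lemma mulE_entry {n : ℕ} (r s j α : Fin n) (x : Matrix (Fin n) (Fin n) ℝ) :
    (x * matE n r s) j α = x j r * dd s α := by
  rcases eq_or_ne s α with rfl | h
  · simp [matE, dd, Matrix.mul_single_apply_same]
  · simp [matE, dd, Matrix.mul_single_apply_of_ne (c := (1:ℝ)) r s j α h.symm x, h]

lemma mulY_entry {n : ℕ} (r s j α : Fin n) (x : Matrix (Fin n) (Fin n) ℝ) :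
    (x * matY n r s) j α
      = (Real.sqrt 2)⁻¹ * (x j r * dd s α - x j s * dd r α) := by
  rw [matY, Matrix.mul_smul, Matrix.smul_apply, Matrix.mul_sub, Matrix.sub_apply,
    mulE_entry, mulE_entry, smul_eq_mul]

lemma halve {n : ℕ} (T : Fin n → Fin n → ℝ) (hsym : ∀ r s, T s r = T r s)
    (hdiag : ∀ r, T r r = 0) :
    ∑ r : Fin n, ∑ s : Fin n, (if r < s then T r s else 0)
      = (1/2) * ∑ r : Fin n, ∑ s : Fin n, T r s := by
  have h1 : ∑ r : Fin n, ∑ s : Fin n, T r s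
      = ∑ r : Fin n, ∑ s : Fin n,
          ((if r < s then T r s else 0) + (if s < r then T r s else 0)) := by
    refine Finset.sum_congr rfl fun r _ => Finset.sum_congr rfl fun s _ => ?_
    rcases lt_trichotomy r s with h | rfl | h
    · simp [h, asymm h]
    · simp [lt_irrefl, hdiag]
    · simp [h, asymm h]
  have h2 : ∑ r : Fin n, ∑ s : Fin n, (if s < r then T r s else 0)
      = ∑ r : Fin n, ∑ s : Fin n, (if r < s then T r s else 0) := by
    rw [Finset.sum_comm]
    exact Finset.sum_congr rfl fun r _ => Finset.sum_congr rfl fun s _ => by rw [hsym]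
  rw [h1]
  simp only [Finset.sum_add_distrib, h2]
  ring

lemma keysum {n : ℕ} (j k α β : Fin n) (x : Matrix (Fin n) (Fin n) ℝ)
    (horth : ∀ a b : Fin n, (∑ m, x a m * x b m) = if a = b then (1:ℝ) else 0) :
    ∑ r : Fin n, ∑ s : Fin n,
        (x j r * dd s α - x j s * dd r α) * (x k r * dd s β - x k s * dd r β)
      = 2 * ((if j = k then (1:ℝ) else 0) * (if α = β then (1:ℝ) else 0) - x j β * x k α) := by
  have expand : ∀ r s : Fin n,
      (x j r * dd s α - x j s * dd r α) * (x k r * dd s β - x k s * dd r β)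
        = x j r * x k r * (dd s α * dd s β) - (x j r * dd r β) * (x k s * dd s α)
          - (x j s * dd s β) * (x k r * dd r α) + x j s * x k s * (dd r α * dd r β) := by
    intro r s; ring
  simp only [expand]
  simp only [Finset.sum_add_distrib, Finset.sum_sub_distrib, ← Finset.sum_mul, ← Finset.mul_sum]
  have hdd : ∀ (γ δ' : Fin n), (∑ s : Fin n, dd s γ * dd s δ') = if γ = δ' then (1:ℝ) else 0 := by
    intro γ δ'
    simp [dd, ite_and, mul_ite, mul_one, mul_zero, Finset.sum_ite_eq', eq_comm]
  have hxd : ∀ (a : Fin n) (γ : Fin n), (∑ s : Fin n, x a s * dd s γ) = x a γ := by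
    intro a γ
    simp [dd, mul_ite, mul_one, mul_zero, Finset.sum_ite_eq']
  simp only [hdd, hxd, horth]
  ring

/-- on `SO(n)` the conformality operator satisfies
`κ(x_{jα}, x_{kβ}) = −(1/2)(x_{kα} x_{jβ} − δ_{kj} δ_{αβ})`. -/
theorem kappa_coeff_SO (n : ℕ) (hn : 2 ≤ n) (j k α β : Fin n)
    (x : Matrix (Fin n) (Fin n) ℝ) (hx : x ∈ SO n) :
    kappaSO n (fun w => w j α) (fun w => w k β) x
      = -(1 / 2) * (x k α * x j β
          - (if k = j then (1 : ℝ) else 0) * (if α = β then (1 : ℝ) else 0)) := by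
  have horth : ∀ a b : Fin n, (∑ m, x a m * x b m) = if a = b then (1:ℝ) else 0 := by
    intro a b
    have := congrFun (congrFun hx.1 a) b
    simpa [Matrix.mul_apply, Matrix.transpose_apply, Matrix.one_apply] using this
  have hsqrt : (Real.sqrt 2)⁻¹ * (Real.sqrt 2)⁻¹ = 1/2 := by
    rw [← mul_inv]
    rw [← Real.sqrt_mul_self (by norm_num : (0:ℝ) ≤ 2)]
    norm_num
  have hterm : ∀ r s : Fin n,
      lieD1 (fun w => w j α) x (matY n r s) * lieD1 (fun w => w k β) x (matY n r s)
        = (1/2) * ((x j r * dd s α - x j s * dd r α) * (x k r * dd s β - x k s * dd r β)) := by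
    intro r s
    rw [lieD1_entry, lieD1_entry, mulY_entry, mulY_entry]
    rw [show ∀ a b : ℝ, ((Real.sqrt 2)⁻¹ * a) * ((Real.sqrt 2)⁻¹ * b)
        = ((Real.sqrt 2)⁻¹ * (Real.sqrt 2)⁻¹) * (a * b) from fun a b => by ring, hsqrt]
  have hsym : ∀ r s : Fin n,
      (x j s * dd r α - x j r * dd s α) * (x k s * dd r β - x k r * dd s β)
        = (x j r * dd s α - x j s * dd r α) * (x k r * dd s β - x k s * dd r β) := by
    intro r s; ring
  calc kappaSO n (fun w => w j α) (fun w => w k β) x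
      = ∑ r : Fin n, ∑ s : Fin n, (if r < s then
          (1/2) * ((x j r * dd s α - x j s * dd r α) * (x k r * dd s β - x k s * dd r β))
          else 0) := by
        unfold kappaSO
        exact Finset.sum_congr rfl fun r _ => Finset.sum_congr rfl fun s _ => by
          rw [hterm]
    _ = (1/2) * ∑ r : Fin n, ∑ s : Fin n,
          (1/2) * ((x j r * dd s α - x j s * dd r α) * (x k r * dd s β - x k s * dd r β)) := by
        refine halve _ (fun r s => by rw [hsym]) (fun r => by ring)
    _ = (1/4) * ∑ r : Fin n, ∑ s : Fin n,
          ((x j r * dd s α - x j s * dd r α) * (x k r * dd s β - x k s * dd r β)) := by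
        simp only [← Finset.mul_sum]; ring
    _ = -(1 / 2) * (x k α * x j β
          - (if k = j then (1 : ℝ) else 0) * (if α = β then (1 : ℝ) else 0)) := by
        rw [keysum j k α β x horth]
        rw [show (if j = k then (1:ℝ) else 0) = (if k = j then (1:ℝ) else 0) by
          simp [eq_comm]]
        ring


end
end
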